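/- Let μ be a singular cardinal with cf(μ) = κ < μ and let λ be a regular cardinal with μ < λ ≤ 2^μ. Suppose that 𝒮 is a nice system for μ (with data (μ_i : i < κ), (λ_i : i < κ), filters 𝒟_i, quasi orders W_i and functions g_i as in the definition), and assume that: (ℵ) 𝒟 is a uniform ultrafilter over κ generated by at most λ many sets; (ℶ) f̄ = (f_α : α < λ) is a sullam in (∏_{i<κ} W_i, 𝒟); and (ℷ) there is a family {𝒜_α : α < λ} ⊆ ∏_{i<κ} 𝒟_i, 𝒜_α = (A_{αi} : i < κ), which is cofinal in (∏_{i<κ} 𝒟_i, ⊇), i.e. for every (B_i : i < κ) ∈ ∏_{i<κ} 𝒟_i there is α < λ with A_{αi} ⊆ B_i for every i < κ. Then there exists a uniform ultrafilter 𝒰 over μ such that Ch(𝒰) ≤ λ. -/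

import Mathlib

open Cardinal Set

noncomputable section

namespace Stmt0

/-- The rank-initial segment of `o.ToType` consisting of the points of rank `< c.ord`;
it plays the role of the cardinal `c` as a subset of the underlying set of `o`. -/
def seg (o : Ordinal) (c : Cardinal) : Set o.ToType :=
  {x | ((Ordinal.ToType.mk (o := o)).symm x).1 < c.ord}

/-- A (uniform) filter over the field `X`, of uniformity `θ`: a collection of subsets
of `X` containing `X`, closed under intersections and supersets (inside `X`), all of
whose members have cardinality `θ`, and containing the complement (in `X`) of every
subset of `X` of cardinality `< θ`. -/
def IsNiceFilter {α : Type} (X : Set α) (θ : Cardinal) (F : Set (Set α)) : Prop :=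
  (∀ A ∈ F, A ⊆ X) ∧ X ∈ F ∧
  (∀ A ∈ F, ∀ B ∈ F, A ∩ B ∈ F) ∧
  (∀ A ∈ F, ∀ B, A ⊆ B → B ⊆ X → B ∈ F) ∧
  (∀ A ∈ F, #A = θ) ∧
  (∀ u : Set α, u ⊆ X → #u < θ → X \ u ∈ F)

/-- `A ⊆_F B`: `A ∖ B` belongs to the ideal dual to the filter `F` over the field `X`. -/
def subFilter {α : Type} (X : Set α) (F : Set (Set α)) (A B : Set α) : Prop :=
  X \ (A \ B) ∈ F

/-- The `F`-positive subsets of the field `X`: those subsets of `X` not in the dual ideal. -/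
def posSets {α : Type} (X : Set α) (F : Set (Set α)) : Set (Set α) :=
  {A | A ⊆ X ∧ X \ A ∉ F}

/-- A nice system for a singular cardinal `μ` of cofinality `κ` (Definition 1.3 of the
paper): increasing sequences of cardinals `μ_i` with supremum `μ` and of regular
cardinals `λ_i` with `μ_i ≤ λ_i < μ_{i+1}` (equivalently, `λ_i < μ_j` for `i < j`),
uniform filters `𝒟_i` over `λ_i`, quasi orders `(W_i, R_i)`, and maps
`g_i : W_i → 𝒟_i⁺` which are `⊆_{𝒟_i}`-decreasing and have the decidability property. -/
structure NiceSystem (mu κ : Cardinal) where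
  muSeq : κ.ord.ToType → Cardinal
  lamSeq : κ.ord.ToType → Cardinal
  D : κ.ord.ToType → Set (Set mu.ord.ToType)
  W : κ.ord.ToType → Type
  R : ∀ i, W i → W i → Prop
  g : ∀ i, W i → Set mu.ord.ToType
  muSeq_mono : StrictMono muSeq
  mu_sup : mu = ⨆ i, muSeq i
  lamSeq_mono : StrictMono lamSeq
  lamSeq_reg : ∀ i, (lamSeq i).IsRegular
  muSeq_le_lamSeq : ∀ i, muSeq i ≤ lamSeq i
  lamSeq_lt_next : ∀ i j, i < j → lamSeq i < muSeq j
  D_filter : ∀ i, IsNiceFilter (seg mu.ord (lamSeq i)) (lamSeq i) (D i)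
  R_refl : ∀ i w, R i w w
  R_trans : ∀ i a b c, R i a b → R i b c → R i a c
  g_pos : ∀ i w, g i w ∈ posSets (seg mu.ord (lamSeq i)) (D i)
  g_dec : ∀ i s t, R i s t →
    subFilter (seg mu.ord (lamSeq i)) (D i) (g i t) (g i s)
  g_decide : ∀ i (s : W i) (A : Set mu.ord.ToType), A ⊆ seg mu.ord (lamSeq i) →
    ∃ t, R i s t ∧
      (subFilter (seg mu.ord (lamSeq i)) (D i) (g i t) A ∨
       subFilter (seg mu.ord (lamSeq i)) (D i) (g i t) (seg mu.ord (lamSeq i) \ A))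

/-- `f̄ = (f_α : α < λ)` is a sullam in `(∏_{i<κ} W_i, 𝒟)`: it is `𝒟`-increasing, and for
every choice of dense subsets `V_i ⊆ W_i` some `f_α` lies in `V_i` for `𝒟`-almost all `i`. -/
def IsSullam {mu κ : Cardinal} (lam : Cardinal) (S : NiceSystem mu κ)
    (𝒟 : Ultrafilter κ.ord.ToType) (f : lam.ord.ToType → ∀ i, S.W i) : Prop :=
  (∀ a b : lam.ord.ToType, a < b → {i | S.R i (f a i) (f b i)} ∈ 𝒟) ∧
  (∀ V : ∀ i, Set (S.W i), (∀ i, ∀ x : S.W i, ∃ y ∈ V i, S.R i x y) →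
    ∃ a : lam.ord.ToType, {i | f a i ∈ V i} ∈ 𝒟)

lemma mk_Iic_lt {c : Cardinal} (hc : ℵ₀ ≤ c) (x : c.ord.ToType) : #(Set.Iic x) < c := by
  have hlim := Cardinal.isSuccLimit_ord hc
  set e := Ordinal.ToType.mk (o := c.ord) with he
  have hr1 : Order.succ ((e.symm x).1) < c.ord := hlim.succ_lt (e.symm x).2
  have hfi : Function.Injective (fun y : Set.Iic x =>
      Ordinal.ToType.mk (o := Order.succ ((e.symm x).1))
        ⟨(e.symm y.1).1, Order.lt_succ_iff.2 (Subtype.coe_le_coe.2 (e.symm.monotone y.2))⟩) := by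
    intro y1 y2 h
    have h2 := Subtype.ext_iff.1 (Ordinal.ToType.mk.injective h)
    have h3 : e.symm y1.1 = e.symm y2.1 := Subtype.ext h2
    exact Subtype.ext (e.symm.injective h3)
  have h4 := Cardinal.mk_le_of_injective hfi
  rw [Cardinal.mk_toType] at h4
  exact h4.trans_lt (Cardinal.lt_ord.1 hr1)

lemma exists_gt_of_le_mk {c : Cardinal} (hc : ℵ₀ ≤ c) {b : Set c.ord.ToType}
    (hb : c ≤ #b) (x : c.ord.ToType) : ∃ y ∈ b, x < y := by
  by_contra h
  push_neg at h
  have hsub : b ⊆ Set.Iic x := fun y hy => h y hy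
  exact absurd (hb.trans (Cardinal.mk_le_mk_of_subset hsub)) (mk_Iic_lt hc x).not_ge

lemma exists_gt' {c : Cardinal} (hc : ℵ₀ ≤ c) (x : c.ord.ToType) : ∃ y, x < y := by
  obtain ⟨y, -, hy⟩ := exists_gt_of_le_mk hc (b := Set.univ)
    (by rw [Cardinal.mk_univ, Cardinal.mk_toType, Cardinal.card_ord]) x
  exact ⟨y, hy⟩

/-- Theorem 1.4 of the paper.  Let `μ` be singular with `cf(μ) = κ < μ`, and let `λ` be
regular with `μ < λ ≤ 2^μ`.  Suppose `𝒮` is a nice system for `μ`, `𝒟` is a uniform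
ultrafilter over `κ` generated by at most `λ` sets, `f̄ = (f_α : α < λ)` is a sullam in
`(∏_{i<κ} W_i, 𝒟)`, and there is a family `(𝒜_α : α < λ) ⊆ ∏_{i<κ} 𝒟_i` cofinal in
`(∏_{i<κ} 𝒟_i, ⊇)`.  Then there is a uniform ultrafilter `𝒰` over `μ` with `Ch(𝒰) ≤ λ`,
i.e. `𝒰` has a `⊆*`-base of cardinality at most `λ`. -/
theorem stmt0 (mu κ lam : Cardinal)
    (hcof : mu.ord.cof = κ) (hsing : κ < mu)
    (hreg : lam.IsRegular) (hmulam : mu < lam) (hlam2 : lam ≤ 2 ^ mu)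
    (S : NiceSystem mu κ)
    (𝒟 : Ultrafilter κ.ord.ToType)
    (h𝒟unif : ∀ s ∈ 𝒟, #s = κ)
    (h𝒟base : ∃ B : Set (Set κ.ord.ToType), #B ≤ lam ∧ (∀ b ∈ B, b ∈ 𝒟) ∧
      ∀ s ∈ 𝒟, ∃ b ∈ B, #↥(b \ s) < κ)
    (f : lam.ord.ToType → ∀ i, S.W i)
    (hf : IsSullam lam S 𝒟 f)
    (𝒜 : lam.ord.ToType → κ.ord.ToType → Set mu.ord.ToType)
    (h𝒜 : ∀ a i, 𝒜 a i ∈ S.D i)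
    (h𝒜cof : ∀ B : κ.ord.ToType → Set mu.ord.ToType, (∀ i, B i ∈ S.D i) →
      ∃ a : lam.ord.ToType, ∀ i, 𝒜 a i ⊆ B i) :
    ∃ 𝒰 : Ultrafilter mu.ord.ToType,
      (∀ s ∈ 𝒰, #s = mu) ∧
      ∃ ℬ : Set (Set mu.ord.ToType), #ℬ ≤ lam ∧ (∀ b ∈ ℬ, b ∈ 𝒰) ∧
        ∀ s ∈ 𝒰, ∃ b ∈ ℬ, #↥(b \ s) < mu := by
  classical
  obtain ⟨B, hBcard, hBmem, hBbase⟩ := h𝒟base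
  -- basic cardinal facts
  have hκ0 : κ ≠ 0 := by
    rintro rfl
    have h1 : mu.ord = 0 := Ordinal.cof_eq_zero.1 hcof
    have h2 : mu = 0 := Cardinal.ord_eq_zero.1 h1
    exact absurd hsing (by rw [h2]; exact lt_irrefl 0)
  have hI : Nonempty κ.ord.ToType :=
    Ordinal.nonempty_toType_iff.2 (fun h => hκ0 (Cardinal.ord_eq_zero.1 h))
  obtain ⟨i0⟩ := hI
  have hmkT : #(mu.ord.ToType) = mu := by rw [Cardinal.mk_toType, Cardinal.card_ord]
  have hseg_card : ∀ i, #(seg mu.ord (S.lamSeq i)) = S.lamSeq i :=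
    fun i => (S.D_filter i).2.2.2.2.1 _ (S.D_filter i).2.1
  have hmuinf : ℵ₀ ≤ mu := by
    refine (S.lamSeq_reg i0).1.trans ?_
    calc S.lamSeq i0 = #(seg mu.ord (S.lamSeq i0)) := (hseg_card i0).symm
      _ ≤ #(mu.ord.ToType) := Cardinal.mk_set_le _
      _ = mu := hmkT
  have hκinf : ℵ₀ ≤ κ := by
    rw [← hcof]
    exact Ordinal.aleph0_le_cof.2 (Cardinal.isSuccLimit_ord hmuinf)
  have hlaminf : ℵ₀ ≤ lam := hreg.1
  have hL : Nonempty lam.ord.ToType :=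
    Ordinal.nonempty_toType_iff.2
      (fun h => (Cardinal.aleph0_pos.trans_le hlaminf).ne' (Cardinal.ord_eq_zero.1 h))
  have hmupos : (0 : Cardinal) < mu := Cardinal.aleph0_pos.trans_le hmuinf
  have hlam_lt : ∀ i, S.lamSeq i < mu := by
    intro i
    obtain ⟨j, hij⟩ := exists_gt' hκinf i
    refine (S.lamSeq_lt_next i j hij).trans_le ?_
    have h1 := le_ciSup (Cardinal.bddAbove_range S.muSeq) j
    rwa [← S.mu_sup] at h1
  -- positivity of pieces
  have hpiece_pos : ∀ i (a c : lam.ord.ToType),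
      (S.g i (f a i) ∩ 𝒜 c i) ∈ posSets (seg mu.ord (S.lamSeq i)) (S.D i) := by
    intro i a c
    obtain ⟨hDsub, hXmem, hinter, hup, hcard, hco⟩ := S.D_filter i
    obtain ⟨hg_sub, hg_pos⟩ := S.g_pos i (f a i)
    refine ⟨(Set.inter_subset_left).trans hg_sub, fun h => hg_pos ?_⟩
    have h2 := hinter _ h _ (h𝒜 c i)
    refine hup _ h2 _ ?_ (Set.diff_subset)
    rintro x ⟨⟨hx1, hx2⟩, hx3⟩
    exact ⟨hx1, fun hg => hx2 ⟨hg, hx3⟩⟩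
  have hpos_card : ∀ i (A : Set mu.ord.ToType),
      A ∈ posSets (seg mu.ord (S.lamSeq i)) (S.D i) → S.lamSeq i ≤ #A := by
    rintro i A ⟨hsub, hpos⟩
    by_contra h
    exact hpos ((S.D_filter i).2.2.2.2.2 A hsub (not_le.1 h))
  -- the generators
  set Xg : Set κ.ord.ToType → lam.ord.ToType → lam.ord.ToType → Set mu.ord.ToType :=
    fun b a c => ⋃ i ∈ b, (S.g i (f a i) ∩ 𝒜 c i) with hXg
  have hXcard : ∀ b ∈ B, ∀ a c, #(Xg b a c) = mu := by
    intro b hbB a c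
    refine le_antisymm (le_of_le_of_eq (Cardinal.mk_set_le _) hmkT) ?_
    calc mu = ⨆ i, S.muSeq i := S.mu_sup
      _ ≤ #(Xg b a c) := ?_
    refine ciSup_le' fun j => ?_
    obtain ⟨i, hib, hji⟩ := exists_gt_of_le_mk hκinf (h𝒟unif b (hBmem b hbB)).ge j
    have h1 : S.muSeq j ≤ S.lamSeq i := (S.muSeq_le_lamSeq j).trans (S.lamSeq_mono hji).le
    have h2 := hpos_card i _ (hpiece_pos i a c)
    have h3 : (S.g i (f a i) ∩ 𝒜 c i) ⊆ Xg b a c :=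
      Set.subset_biUnion_of_mem (u := fun i => S.g i (f a i) ∩ 𝒜 c i) hib
    exact h1.trans (h2.trans (Cardinal.mk_le_mk_of_subset h3))
  -- small unions
  have hsmall : ∀ s : Set κ.ord.ToType, #s < κ →
      #(⋃ i ∈ s, seg mu.ord (S.lamSeq i)) < mu := by
    intro s hs
    refine (Cardinal.mk_biUnion_le _ _).trans_lt
      (Cardinal.mul_lt_of_lt hmuinf (hs.trans hsing) ?_)
    refine Ordinal.iSup_lt ?_ ?_
    · rw [hcof]; exact hs
    · intro i
      rw [hseg_card]
      exact hlam_lt _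
  -- the filter sets
  set P : Set (Set mu.ord.ToType) :=
    {A | ∃ b ∈ B, ∃ a c : lam.ord.ToType, #↥(Xg b a c \ A) < mu} with hP
  have hgen_memP : ∀ b ∈ B, ∀ a c, Xg b a c ∈ P := by
    intro b hbB a c
    exact ⟨b, hbB, a, c, by rw [Set.diff_self]; simpa using hmupos⟩
  have hP_mono : ∀ A A' : Set mu.ord.ToType, A ∈ P → A ⊆ A' → A' ∈ P := by
    rintro A A' ⟨b, hbB, a, c, hlt⟩ hsub
    exact ⟨b, hbB, a, c,
      (Cardinal.mk_le_mk_of_subset (Set.diff_subset_diff_right hsub)).trans_lt hlt⟩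
  -- construction of an almost-subset generator, given D_i-membership data
  have hbuild : ∀ (a : lam.ord.ToType) (A' : Set mu.ord.ToType),
      {i | subFilter (seg mu.ord (S.lamSeq i)) (S.D i) (S.g i (f a i)) A'} ∈ 𝒟 →
      A' ∈ P := by
    intro a A' hG
    set G := {i | subFilter (seg mu.ord (S.lamSeq i)) (S.D i) (S.g i (f a i)) A'} with hGdef
    set Bf : κ.ord.ToType → Set mu.ord.ToType := fun i =>
      if i ∈ G then seg mu.ord (S.lamSeq i) \ (S.g i (f a i) \ A')
      else seg mu.ord (S.lamSeq i) with hBf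
    have hBfD : ∀ i, Bf i ∈ S.D i := by
      intro i
      by_cases h : i ∈ G
      · simp only [hBf, if_pos h]
        exact h
      · simp only [hBf, if_neg h]
        exact (S.D_filter i).2.1
    obtain ⟨c, hc⟩ := h𝒜cof Bf hBfD
    obtain ⟨b, hbB, hbG⟩ := hBbase G hG
    refine ⟨b, hbB, a, c, ?_⟩
    have hsub2 : Xg b a c \ A' ⊆ ⋃ i ∈ (b \ G), seg mu.ord (S.lamSeq i) := by
      rintro x ⟨hx, hxA⟩
      obtain ⟨i, hib, hxp⟩ := Set.mem_iUnion₂.1 hx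
      by_cases hiG : i ∈ G
      · exfalso
        have h1 : x ∈ Bf i := hc i hxp.2
        rw [hBf] at h1
        simp only [hiG, if_pos] at h1
        exact hxA (by_contra fun hA => h1.2 ⟨hxp.1, hA⟩)
      · exact Set.mem_biUnion ⟨hib, hiG⟩ ((S.g_pos i (f a i)).1 hxp.1)
    exact (Cardinal.mk_le_mk_of_subset hsub2).trans_lt (hsmall _ hbG)
  -- ultrafilter-ness: decidability via the sullam
  have hkey : ∀ A : Set mu.ord.ToType, A ∈ P ∨ Aᶜ ∈ P := by
    intro A
    set V : ∀ i, Set (S.W i) := fun i =>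
      {t | subFilter (seg mu.ord (S.lamSeq i)) (S.D i) (S.g i t) A ∨
           subFilter (seg mu.ord (S.lamSeq i)) (S.D i) (S.g i t) Aᶜ} with hV
    have hVdense : ∀ i, ∀ x : S.W i, ∃ y ∈ V i, S.R i x y := by
      intro i x
      obtain ⟨t, hRt, hdec⟩ := S.g_decide i x (A ∩ seg mu.ord (S.lamSeq i))
        Set.inter_subset_right
      have hgs : S.g i t ⊆ seg mu.ord (S.lamSeq i) := (S.g_pos i t).1
      refine ⟨t, ?_, hRt⟩
      rcases hdec with h | h
      · left
        unfold subFilter at h ⊢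
        have e1 : S.g i t \ (A ∩ seg mu.ord (S.lamSeq i)) = S.g i t \ A := by
          ext y
          simp only [Set.mem_diff, Set.mem_inter_iff, not_and]
          exact ⟨fun ⟨h1, h2⟩ => ⟨h1, fun hA => absurd (h2 hA) (fun h' => h' (hgs h1))⟩,
            fun ⟨h1, h2⟩ => ⟨h1, fun hA => absurd hA h2⟩⟩
        rwa [e1] at h
      · right
        unfold subFilter at h ⊢
        have e1 : S.g i t \ (seg mu.ord (S.lamSeq i) \ (A ∩ seg mu.ord (S.lamSeq i)))
            = S.g i t \ Aᶜ := by
          ext y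
          constructor
          · rintro ⟨h1, h2⟩
            refine ⟨h1, fun hA => h2 ⟨hgs h1, fun hy => hA hy.1⟩⟩
          · rintro ⟨h1, h2⟩
            have hA : y ∈ A := not_not.1 h2
            exact ⟨h1, fun hy => hy.2 ⟨hA, hgs h1⟩⟩
        rwa [e1] at h
    obtain ⟨a, haV⟩ := hf.2 V hVdense
    have hsplit : {i | f a i ∈ V i} ⊆
        {i | subFilter (seg mu.ord (S.lamSeq i)) (S.D i) (S.g i (f a i)) A} ∪
        {i | subFilter (seg mu.ord (S.lamSeq i)) (S.D i) (S.g i (f a i)) Aᶜ} :=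
      fun i hi => hi
    have hun := Filter.mem_of_superset haV hsplit
    rcases (Ultrafilter.union_mem_iff.1 hun) with h | h
    · exact Or.inl (hbuild a A h)
    · exact Or.inr (hbuild a Aᶜ h)
  -- directedness of the generators
  have hdir : ∀ b1 ∈ B, ∀ b2 ∈ B, ∀ a1 a2 c1 c2 : lam.ord.ToType, ∃ b3 ∈ B,
      ∃ a3 c3 : lam.ord.ToType,
      #↥(Xg b3 a3 c3 \ (Xg b1 a1 c1 ∩ Xg b2 a2 c2)) < mu := by
    intro b1 hb1 b2 hb2 a1 a2 c1 c2
    obtain ⟨a3, ha3⟩ := exists_gt' hlaminf (max a1 a2)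
    have ha31 : a1 < a3 := (le_max_left a1 a2).trans_lt ha3
    have ha32 : a2 < a3 := (le_max_right a1 a2).trans_lt ha3
    have hS1 := hf.1 a1 a3 ha31
    have hS2 := hf.1 a2 a3 ha32
    set SS : Set κ.ord.ToType :=
      {i | S.R i (f a1 i) (f a3 i)} ∩ {i | S.R i (f a2 i) (f a3 i)} with hSS
    have hSSD : SS ∈ 𝒟 := Filter.inter_mem hS1 hS2
    set Bf : κ.ord.ToType → Set mu.ord.ToType := fun i =>
      if i ∈ SS then
        ((seg mu.ord (S.lamSeq i) \ (S.g i (f a3 i) \ S.g i (f a1 i))) ∩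
         (seg mu.ord (S.lamSeq i) \ (S.g i (f a3 i) \ S.g i (f a2 i)))) ∩
        (𝒜 c1 i ∩ 𝒜 c2 i)
      else seg mu.ord (S.lamSeq i) with hBf
    have hBfD : ∀ i, Bf i ∈ S.D i := by
      intro i
      obtain ⟨hDsub, hXmem, hinter, hup, hcard, hco⟩ := S.D_filter i
      by_cases h : i ∈ SS
      · have h1 := S.g_dec i (f a1 i) (f a3 i) h.1
        have h2 := S.g_dec i (f a2 i) (f a3 i) h.2
        simp only [hBf, h, if_pos]
        exact hinter _ (hinter _ h1 _ h2) _ (hinter _ (h𝒜 c1 i) _ (h𝒜 c2 i))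
      · simpa [hBf, h] using hXmem
    obtain ⟨c3, hc3⟩ := h𝒜cof Bf hBfD
    have hmem3 : (b1 ∩ b2) ∩ SS ∈ 𝒟 :=
      Filter.inter_mem (Filter.inter_mem (hBmem b1 hb1) (hBmem b2 hb2)) hSSD
    obtain ⟨b3, hb3B, hb3⟩ := hBbase _ hmem3
    refine ⟨b3, hb3B, a3, c3, ?_⟩
    have hsub : Xg b3 a3 c3 \ (Xg b1 a1 c1 ∩ Xg b2 a2 c2) ⊆
        ⋃ i ∈ (b3 \ ((b1 ∩ b2) ∩ SS)), seg mu.ord (S.lamSeq i) := by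
      rintro x ⟨hx, hxI⟩
      obtain ⟨i, hib3, hxp⟩ := Set.mem_iUnion₂.1 hx
      by_cases hi : i ∈ (b1 ∩ b2) ∩ SS
      · exfalso
        apply hxI
        have h1 : x ∈ Bf i := hc3 i hxp.2
        rw [hBf] at h1
        simp only [hi.2, if_pos] at h1
        obtain ⟨⟨hq1, hq2⟩, hA1, hA2⟩ := h1
        have hx1 : x ∈ S.g i (f a1 i) := by
          by_contra hcon
          exact hq1.2 ⟨hxp.1, hcon⟩
        have hx2 : x ∈ S.g i (f a2 i) := by
          by_contra hcon
          exact hq2.2 ⟨hxp.1, hcon⟩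
        exact ⟨Set.mem_biUnion hi.1.1 ⟨hx1, hA1⟩, Set.mem_biUnion hi.1.2 ⟨hx2, hA2⟩⟩
      · exact Set.mem_biUnion ⟨hib3, hi⟩ ((S.g_pos i (f a3 i)).1 hxp.1)
    exact (Cardinal.mk_le_mk_of_subset hsub).trans_lt (hsmall _ hb3)
  -- closure under intersections
  have hPinter : ∀ A1 A2 : Set mu.ord.ToType, A1 ∈ P → A2 ∈ P → A1 ∩ A2 ∈ P := by
    rintro A1 A2 ⟨b1, hb1, a1, c1, h1⟩ ⟨b2, hb2, a2, c2, h2⟩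
    obtain ⟨b3, hb3B, a3, c3, h3⟩ := hdir b1 hb1 b2 hb2 a1 a2 c1 c2
    refine ⟨b3, hb3B, a3, c3, ?_⟩
    have hsub : Xg b3 a3 c3 \ (A1 ∩ A2) ⊆
        (Xg b3 a3 c3 \ (Xg b1 a1 c1 ∩ Xg b2 a2 c2)) ∪
        ((Xg b1 a1 c1 \ A1) ∪ (Xg b2 a2 c2 \ A2)) := by
      rintro x ⟨hx, hxI⟩
      by_cases hx12 : x ∈ Xg b1 a1 c1 ∩ Xg b2 a2 c2
      · right
        by_cases hA1 : x ∈ A1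
        · exact Or.inr ⟨hx12.2, fun hA2 => hxI ⟨hA1, hA2⟩⟩
        · exact Or.inl ⟨hx12.1, hA1⟩
      · exact Or.inl ⟨hx, hx12⟩
    refine (Cardinal.mk_le_mk_of_subset hsub).trans_lt ?_
    refine (Cardinal.mk_union_le _ _).trans_lt (Cardinal.add_lt_of_lt hmuinf h3 ?_)
    exact (Cardinal.mk_union_le _ _).trans_lt (Cardinal.add_lt_of_lt hmuinf h1 h2)
  have hP_univ : Set.univ ∈ P := by
    obtain ⟨b, hbB, -⟩ := hBbase Set.univ Filter.univ_mem
    obtain ⟨a⟩ := hL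
    exact hP_mono _ _ (hgen_memP b hbB a a) (Set.subset_univ _)
  have hPproper : ∀ A : Set mu.ord.ToType, A ∈ P → Aᶜ ∈ P → False := by
    intro A h1 h2
    obtain ⟨b, hbB, a, c, hlt⟩ := hPinter _ _ h1 h2
    rw [Set.inter_compl_self, Set.diff_empty, hXcard b hbB a c] at hlt
    exact lt_irrefl _ hlt
  -- assemble the ultrafilter
  set F : Filter mu.ord.ToType :=
    { sets := P
      univ_sets := hP_univ
      sets_of_superset := fun hA hsub => hP_mono _ _ hA hsub
      inter_sets := fun hA hB' => hPinter _ _ hA hB' } with hF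
  have hmemF : ∀ A : Set mu.ord.ToType, A ∈ F ↔ A ∈ P := fun A => Iff.rfl
  have hcompl : ∀ s : Set mu.ord.ToType, sᶜ ∉ F ↔ s ∈ F := by
    intro s
    constructor
    · intro h
      rcases hkey s with h' | h'
      · exact (hmemF s).2 h'
      · exact absurd ((hmemF _).2 h') h
    · intro hs hsc
      exact hPproper s ((hmemF s).1 hs) ((hmemF _).1 hsc)
  refine ⟨Ultrafilter.ofComplNotMemIff F hcompl, ?_, ?_⟩
  · -- uniformity
    intro s hs
    obtain ⟨b, hbB, a, c, hlt⟩ := (hmemF s).1 hs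
    refine le_antisymm (le_of_le_of_eq (Cardinal.mk_set_le _) hmkT) ?_
    by_contra h
    push_neg at h
    have hXsplit : Xg b a c ⊆ (Xg b a c \ s) ∪ s := by
      intro x hx
      by_cases hxs : x ∈ s
      · exact Or.inr hxs
      · exact Or.inl ⟨hx, hxs⟩
    have := (Cardinal.mk_le_mk_of_subset hXsplit).trans (Cardinal.mk_union_le _ _)
    rw [hXcard b hbB a c] at this
    exact absurd this (Cardinal.add_lt_of_lt hmuinf hlt h).not_ge
  · -- the base
    refine ⟨Set.range (fun p : ↥B × lam.ord.ToType × lam.ord.ToType =>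
      Xg p.1.1 p.2.1 p.2.2), ?_, ?_, ?_⟩
    · refine Cardinal.mk_range_le.trans ?_
      have h1 : #(↥B × lam.ord.ToType × lam.ord.ToType)
          = #↥B * (#(lam.ord.ToType) * #(lam.ord.ToType)) := by
        rw [Cardinal.mk_prod, Cardinal.mk_prod, Cardinal.lift_id, Cardinal.lift_id,
          Cardinal.lift_id]
      rw [h1, Cardinal.mk_toType, Cardinal.card_ord, Cardinal.mul_eq_self hlaminf]
      calc #↥B * lam ≤ lam * lam :=
            mul_le_mul' hBcard le_rfl
        _ = lam := Cardinal.mul_eq_self hlaminf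
    · rintro Y ⟨⟨⟨b, hbB⟩, a, c⟩, rfl⟩
      exact (hmemF _).2 (hgen_memP b hbB a c)
    · intro s hs
      obtain ⟨b, hbB, a, c, hlt⟩ := (hmemF s).1 hs
      exact ⟨Xg b a c, ⟨⟨⟨b, hbB⟩, a, c⟩, rfl⟩, hlt⟩


end Stmt0
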